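/- If M, H are d×d max-plus matrices with λ(H) ≤ 0 and m ≥ d+1, then the first component A of (M,H)^m equals (M ⊕ H) ⊗ H*, where H* = I ⊕ H ⊕ ⋯ ⊕ H^{⊗(d-1)} is the Kleene star of H. -/

import Mathlib

open Finset

abbrev Rmax : Type := WithBot ℝ

/-- Tropical (max-plus) matrix product. -/
noncomputable def trMul {l m n : ℕ} (A : Matrix (Fin l) (Fin m) Rmax) (B : Matrix (Fin m) (Fin n) Rmax) :
    Matrix (Fin l) (Fin n) Rmax :=
  fun i j => univ.sup fun k => A i k + B k j

/-- Entrywise tropical sum (max) of matrices. -/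
noncomputable def trSup {m n : ℕ} (A B : Matrix (Fin m) (Fin n) Rmax) : Matrix (Fin m) (Fin n) Rmax :=
  fun i j => A i j ⊔ B i j

/-- Tropical identity matrix. -/
noncomputable def trId (d : ℕ) : Matrix (Fin d) (Fin d) Rmax := fun i j => if i = j then 0 else ⊥

/-- Tropical matrix powers, `trPow A 0 = I`. -/
noncomputable def trPow {d : ℕ} (A : Matrix (Fin d) (Fin d) Rmax) : ℕ → Matrix (Fin d) (Fin d) Rmax
  | 0 => trId d
  | n + 1 => trMul (trPow A n) A

/-- Adjoint product `A ∘ B = A ⊕ B ⊕ (A ⊗ B)`. -/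
noncomputable def adj {d : ℕ} (A B : Matrix (Fin d) (Fin d) Rmax) : Matrix (Fin d) (Fin d) Rmax :=
  trSup (trSup A B) (trMul A B)

/-- Adjoint powers: `adjPow A n = A^{∘n}` for `n ≥ 1` (value at 0 is junk `A`). -/
noncomputable def adjPow {d : ℕ} (A : Matrix (Fin d) (Fin d) Rmax) : ℕ → Matrix (Fin d) (Fin d) Rmax
  | 0 => A
  | 1 => A
  | n + 2 => adj (adjPow A (n + 1)) A

/-- Semidirect product of pairs:
`(M,G)·(A,H) = (M ⊕ A ⊕ H ⊕ (M ⊗ H), G ∘ H)`. -/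
noncomputable def sd {d : ℕ} (p q : Matrix (Fin d) (Fin d) Rmax × Matrix (Fin d) (Fin d) Rmax) :
    Matrix (Fin d) (Fin d) Rmax × Matrix (Fin d) (Fin d) Rmax :=
  (trSup (trSup (trSup p.1 q.1) q.2) (trMul p.1 q.2), adj p.2 q.2)

/-- Semidirect powers: `sdPow p n = p^n` for `n ≥ 1` (value at 0 is junk `p`). -/
noncomputable def sdPow {d : ℕ} (p : Matrix (Fin d) (Fin d) Rmax × Matrix (Fin d) (Fin d) Rmax) :
    ℕ → Matrix (Fin d) (Fin d) Rmax × Matrix (Fin d) (Fin d) Rmax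
  | 0 => p
  | 1 => p
  | n + 2 => sd (sdPow p (n + 1)) p

/-- Maximum cycle mean `λ(F)`: maximum over cycles `(c 0, c 1, …, c k, c 0)` of
the average arc weight. -/
noncomputable def mcm {d : ℕ} (F : Matrix (Fin d) (Fin d) Rmax) : Rmax :=
  univ.sup fun kc : Σ k : Fin d, Fin (k.1 + 1) → Fin d =>
    (∑ i, F (kc.2 i) (kc.2 (i + 1))).map fun w => w / ((kc.1 : ℕ) + 1)

/-- Metric matrix `A⁺ = A ⊕ A^{⊗2} ⊕ ⋯ ⊕ A^{⊗d}`. -/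
noncomputable def metric {d : ℕ} (A : Matrix (Fin d) (Fin d) Rmax) : Matrix (Fin d) (Fin d) Rmax :=
  fun i j => (Finset.Icc 1 d).sup fun k => trPow A k i j

/-- Kleene star `A* = I ⊕ A ⊕ ⋯ ⊕ A^{⊗(d-1)}`. -/
noncomputable def kstar {d : ℕ} (A : Matrix (Fin d) (Fin d) Rmax) : Matrix (Fin d) (Fin d) Rmax :=
  fun i j => (Finset.range d).sup fun k => trPow A k i j

/-- `F` is irreducible: its weighted digraph is strongly connected. -/
def TrIrreducible {d : ℕ} (F : Matrix (Fin d) (Fin d) Rmax) : Prop :=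
  ∀ i j : Fin d, Relation.ReflTransGen (fun a b => F a b ≠ ⊥) i j



-- ## sup/add helpers

lemma supAdd {ι : Type*} (s : Finset ι) (f : ι → Rmax) (c : Rmax) :
    s.sup f + c = s.sup fun x => f x + c := by
  induction s using Finset.cons_induction with
  | empty => simp [WithBot.bot_add]
  | cons a s h ih => simp [Finset.sup_cons, ← ih, (max_add_add_right _ _ _).symm]

lemma addSup {ι : Type*} (s : Finset ι) (f : ι → Rmax) (c : Rmax) :
    c + s.sup f = s.sup fun x => c + f x := by
  induction s using Finset.cons_induction with
  | empty => simp [WithBot.add_bot]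
  | cons a s h ih => simp [Finset.sup_cons, ← ih, (max_add_add_left _ _ _).symm]

-- ## ℕ-indexed path weights

noncomputable def wN {d : ℕ} (H : Matrix (Fin d) (Fin d) Rmax) (k : ℕ) (v : ℕ → Fin d) : Rmax :=
  ∑ i ∈ Finset.range k, H (v i) (v (i+1))

lemma wN_le_trPow {d : ℕ} (H : Matrix (Fin d) (Fin d) Rmax) (k : ℕ) (v : ℕ → Fin d) :
    wN H k v ≤ trPow H k (v 0) (v k) := by
  induction k with
  | zero => simp [wN, trPow, trId]
  | succ k ih =>
      have h1 : wN H (k+1) v = wN H k v + H (v k) (v (k+1)) := Finset.sum_range_succ _ _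
      rw [h1]
      calc wN H k v + H (v k) (v (k+1)) ≤ trPow H k (v 0) (v k) + H (v k) (v (k+1)) :=
            add_le_add_left ih _
        _ ≤ trPow H (k+1) (v 0) (v (k+1)) := Finset.le_sup (f := fun l => trPow H k (v 0) l + H l (v (k+1))) (mem_univ (v k))
lemma map_div_nonpos (S : Rmax) (D : ℝ) (hD : 0 < D) (h : S.map (fun w => w / D) ≤ 0) : S ≤ 0 := by
  induction S using WithBot.recBotCoe with
  | bot => exact bot_le
  | coe r =>
      rw [WithBot.map_coe] at h
      have h' : r / D ≤ 0 := by
        rwa [show (0:Rmax) = ((0:ℝ) : WithBot ℝ) from rfl, WithBot.coe_le_coe] at h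
      have hr : r ≤ 0 := by
        rcases div_nonpos_iff.mp h' with ⟨h1, h2⟩ | ⟨h1, h2⟩
        · linarith
        · exact h1
      exact_mod_cast hr

lemma cyc_nonpos {d : ℕ} (H : Matrix (Fin d) (Fin d) Rmax) (hH : mcm H ≤ 0)
    (v : ℕ → Fin d) (a c : ℕ) (hc : 1 ≤ c) (hcd : c ≤ d) (hva : v (a + c) = v a) :
    ∑ i ∈ Finset.Ico a (a + c), H (v i) (v (i+1)) ≤ 0 := by
  set kc : Σ k : Fin d, Fin (k.1 + 1) → Fin d :=
    ⟨⟨c - 1, by omega⟩, fun t => v (a + t.val)⟩ with hkc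
  have hcycsum : (∑ i, H (kc.2 i) (kc.2 (i + 1)))
      = ∑ i ∈ Finset.Ico a (a + c), H (v i) (v (i+1)) := by
    have h1 : (∑ i, H (kc.2 i) (kc.2 (i + 1)))
        = ∑ n ∈ Finset.range (c - 1 + 1), H (v (a + n)) (v (a + (n + 1) % (c - 1 + 1))) := by
      rw [← Fin.sum_univ_eq_sum_range (fun n => H (v (a + n)) (v (a + (n + 1) % (c - 1 + 1))))]
      apply Finset.sum_congr rfl
      intro t _
      have hval : ((t + 1 : Fin ((kc.1 : ℕ) + 1)) : ℕ) = ((t : ℕ) + 1) % ((c - 1) + 1) := by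
        rw [Fin.val_add, Fin.val_one', Nat.add_mod_mod]
      show H (v (a + t.val)) (v (a + ((t + 1 : Fin _)).val)) = _
      rw [hval]
    have h2 : c - 1 + 1 = c := by omega
    rw [h1, h2]
    rw [Finset.sum_Ico_eq_sum_range]
    have h3 : a + c - a = c := by omega
    rw [h3]
    apply Finset.sum_congr rfl
    intro n hn
    rw [Finset.mem_range] at hn
    by_cases h : n + 1 = c
    · have hmod : (n + 1) % c = 0 := by rw [h]; exact Nat.mod_self c
      rw [hmod]
      have he : a + n + 1 = a + c := by omega
      rw [he, hva]
      simp
    · have hmod : (n + 1) % c = n + 1 := Nat.mod_eq_of_lt (by omega)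
      rw [hmod, Nat.add_assoc]
  have hle : (∑ i, H (kc.2 i) (kc.2 (i + 1))).map (fun w => w / (((kc.1 : ℕ) : ℝ) + 1)) ≤ 0 := by
    unfold mcm at hH
    exact le_trans (Finset.le_sup (f := fun kc : Σ k : Fin d, Fin (k.1+1) → Fin d =>
      (∑ i, H (kc.2 i) (kc.2 (i+1))).map fun w : ℝ => w / (((kc.1:ℕ):ℝ)+1)) (mem_univ kc)) hH
  have hD : (((kc.1 : ℕ) : ℝ) + 1) = (c : ℝ) := by
    show ((c - 1 : ℕ) : ℝ) + 1 = (c : ℝ)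
    rw [Nat.cast_sub hc]
    simp
  rw [hcycsum] at hle
  simp only [hD] at hle
  exact map_div_nonpos _ _ (by exact_mod_cast hc) hle

lemma wN_le_kstar {d : ℕ} (H : Matrix (Fin d) (Fin d) Rmax) (hH : mcm H ≤ 0) (k : ℕ) :
    ∀ v : ℕ → Fin d, wN H k v ≤ kstar H (v 0) (v k) := by
  induction k using Nat.strong_induction_on with
  | _ k ih =>
    intro v
    by_cases hk : k < d
    · exact le_trans (wN_le_trPow H k v) (Finset.le_sup (f := fun t => trPow H t (v 0) (v k)) (Finset.mem_range.mpr hk))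
    · push_neg at hk
      have hd : 0 < d := (v 0).pos
      obtain ⟨A, B, hAB, hBd, hvAB⟩ : ∃ A B : ℕ, A < B ∧ B ≤ d ∧ v A = v B := by
        obtain ⟨a, b, hab, hvab⟩ := Fintype.exists_ne_map_eq_of_card_lt
          (fun t : Fin (d+1) => v t.val) (by simp)
        have hne : a.val ≠ b.val := fun h => hab (Fin.ext h)
        rcases Nat.lt_or_ge a.val b.val with h | h
        · exact ⟨a.val, b.val, h, Nat.lt_succ_iff.mp b.isLt, hvab⟩
        · exact ⟨b.val, a.val, by omega, Nat.lt_succ_iff.mp a.isLt, hvab.symm⟩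
      set c := B - A with hcdef
      have hc : 1 ≤ c := by omega
      have hAc : A + c = B := by omega
      have hBk : B ≤ k := by omega
      have hcyc : ∑ i ∈ Finset.Ico A B, H (v i) (v (i+1)) ≤ 0 := by
        have := cyc_nonpos H hH v A c hc (by omega) (by rw [hAc, hvAB])
        rwa [hAc] at this
      set v' : ℕ → Fin d := fun n => if n < A then v n else v (n + c) with hv'
      set f : ℕ → Rmax := fun i => H (v i) (v (i+1)) with hf
      set g : ℕ → Rmax := fun i => H (v' i) (v' (i+1)) with hg
      have hg1 : ∀ i ∈ Finset.Ico 0 A, g i = f i := by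
        intro i hi
        rw [Finset.mem_Ico] at hi
        have hiA : i < A := hi.2
        have e1 : v' i = v i := by simp [hv', hiA]
        have e2 : v' (i+1) = v (i+1) := by
          by_cases h : i + 1 < A
          · simp [hv', h]
          · have hiA1 : i + 1 = A := by omega
            simp only [hv', if_neg (by omega : ¬ i + 1 < A)]
            rw [hiA1, hAc, ← hvAB, ← hiA1]
        rw [hg, hf]
        simp only [e1, e2]
      have e1 : wN H k v =
          (∑ i ∈ Finset.Ico 0 A, f i) + ((∑ i ∈ Finset.Ico A B, f i) + (∑ i ∈ Finset.Ico B k, f i)) := by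
        rw [wN, Finset.range_eq_Ico,
          ← Finset.sum_Ico_consecutive f (Nat.zero_le A) (le_trans (by omega) hBk),
          ← Finset.sum_Ico_consecutive f (le_of_lt hAB) hBk]
      have e2 : wN H (k - c) v' =
          (∑ i ∈ Finset.Ico 0 A, f i) + (∑ i ∈ Finset.Ico B k, f i) := by
        rw [wN, Finset.range_eq_Ico,
          ← Finset.sum_Ico_consecutive g (Nat.zero_le A) (by omega : A ≤ k - c)]
        congr 1
        · exact Finset.sum_congr rfl hg1
        · rw [Finset.sum_Ico_eq_sum_range, Finset.sum_Ico_eq_sum_range]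
          have hlen : k - c - A = k - B := by omega
          rw [hlen]
          apply Finset.sum_congr rfl
          intro n hn
          rw [Finset.mem_range] at hn
          have hx1 : ¬ A + n < A := by omega
          have hx2 : ¬ A + n + 1 < A := by omega
          simp only [hg, hv', hf, if_neg hx1, if_neg hx2]
          congr 2 <;> omega
      have key : wN H k v ≤ wN H (k - c) v' := by
        rw [e1, e2]
        calc (∑ i ∈ Finset.Ico 0 A, f i) + ((∑ i ∈ Finset.Ico A B, f i) + (∑ i ∈ Finset.Ico B k, f i))
            ≤ (∑ i ∈ Finset.Ico 0 A, f i) + ((0:Rmax) + (∑ i ∈ Finset.Ico B k, f i)) := by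
              apply add_le_add_right
              exact add_le_add_left hcyc _
          _ = (∑ i ∈ Finset.Ico 0 A, f i) + (∑ i ∈ Finset.Ico B k, f i) := by rw [zero_add]
      have hv'0 : v' 0 = v 0 := by
        by_cases h : 0 < A
        · simp [hv', h]
        · have hA0 : A = 0 := by omega
          simp only [hv', if_neg (by omega : ¬ (0:ℕ) < A)]
          rw [zero_add, show c = B by omega, ← hvAB, hA0]
      have hv'k : v' (k - c) = v k := by
        simp only [hv', if_neg (by omega : ¬ k - c < A)]
        congr 1
        omega
      have := ih (k - c) (by omega) v'
      rw [hv'0, hv'k] at this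
      exact le_trans key this

noncomputable def wF {d : ℕ} (H : Matrix (Fin d) (Fin d) Rmax) (k : ℕ) (w : Fin (k+1) → Fin d) : Rmax :=
  ∑ t : Fin k, H (w t.castSucc) (w t.succ)

lemma wF_snoc {d : ℕ} (H : Matrix (Fin d) (Fin d) Rmax) (k : ℕ) (w : Fin (k+1) → Fin d) (x : Fin d) :
    wF H (k+1) (Fin.snoc w x) = wF H k w + H (w (Fin.last k)) x := by
  rw [wF, Fin.sum_univ_castSucc]
  congr 1
  · apply Finset.sum_congr rfl
    intro t _
    rw [Fin.succ_castSucc, Fin.snoc_castSucc, Fin.snoc_castSucc]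
  · rw [Fin.succ_last, Fin.snoc_castSucc, Fin.snoc_last]

lemma snoc_zero' {d k : ℕ} (w : Fin (k+1) → Fin d) (x : Fin d) :
    (Fin.snoc w x : Fin (k+2) → Fin d) 0 = w 0 := by
  rw [← Fin.castSucc_zero, Fin.snoc_castSucc]

lemma trPow_le_Q {d : ℕ} (H : Matrix (Fin d) (Fin d) Rmax) (k : ℕ) (i j : Fin d) :
    trPow H k i j ≤ univ.sup
      (fun w : Fin (k+1) → Fin d => if w 0 = i ∧ w (Fin.last k) = j then wF H k w else ⊥) := by
  induction k generalizing j with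
  | zero =>
    show trId d i j ≤ _
    rw [trId]
    by_cases hij : i = j
    · rw [if_pos hij]
      have hmem : (fun _ : Fin 1 => i) ∈ (univ : Finset (Fin 1 → Fin d)) := mem_univ _
      refine le_trans ?_ (Finset.le_sup hmem)
      rw [if_pos ⟨rfl, hij⟩, wF]
      simp
    · rw [if_neg hij]; exact bot_le
  | succ k ih =>
    show (univ.sup fun l => trPow H k i l + H l j) ≤ _
    apply Finset.sup_le
    intro l _
    calc trPow H k i l + H l j
        ≤ (univ.sup fun w : Fin (k+1) → Fin d =>
            if w 0 = i ∧ w (Fin.last k) = l then wF H k w else ⊥) + H l j :=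
          add_le_add_left (ih l) _
      _ = univ.sup fun w : Fin (k+1) → Fin d =>
            (if w 0 = i ∧ w (Fin.last k) = l then wF H k w else ⊥) + H l j := supAdd _ _ _
      _ ≤ _ := by
          apply Finset.sup_le
          intro w _
          by_cases hcond : w 0 = i ∧ w (Fin.last k) = l
          · rw [if_pos hcond]
            have hsn : wF H (k+1) (Fin.snoc w j) = wF H k w + H l j := by
              rw [wF_snoc, hcond.2]
            refine le_trans ?_ (Finset.le_sup (mem_univ (Fin.snoc w j : Fin (k+2) → Fin d)))
            rw [if_pos ⟨by rw [snoc_zero', hcond.1], by rw [Fin.snoc_last]⟩, hsn]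
          · rw [if_neg hcond, WithBot.bot_add]
            exact bot_le

lemma wF_eq_wN {d : ℕ} (H : Matrix (Fin d) (Fin d) Rmax) (k : ℕ) (w : Fin (k+1) → Fin d) :
    wF H k w = wN H k (fun n => w ⟨min n k, Nat.lt_succ_of_le (min_le_right n k)⟩) := by
  rw [wN, ← Fin.sum_univ_eq_sum_range
    (fun n => H (w ⟨min n k, Nat.lt_succ_of_le (min_le_right n k)⟩)
      (w ⟨min (n+1) k, Nat.lt_succ_of_le (min_le_right (n+1) k)⟩)) k, wF]
  apply Finset.sum_congr rfl
  intro t _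
  congr 1
  · congr 1
    apply Fin.ext
    simp [Nat.min_eq_left (le_of_lt t.isLt)]
  · congr 1
    apply Fin.ext
    simp only [Fin.val_succ]
    exact (Nat.min_eq_left t.isLt).symm

lemma trPow_le_kstar {d : ℕ} (H : Matrix (Fin d) (Fin d) Rmax) (hH : mcm H ≤ 0) (k : ℕ)
    (i j : Fin d) : trPow H k i j ≤ kstar H i j := by
  refine le_trans (trPow_le_Q H k i j) (Finset.sup_le ?_)
  intro w _
  by_cases hcond : w 0 = i ∧ w (Fin.last k) = j
  · rw [if_pos hcond, wF_eq_wN]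
    have h := wN_le_kstar H hH k (fun n => w ⟨min n k, Nat.lt_succ_of_le (min_le_right n k)⟩)
    have a0 : (⟨min 0 k, Nat.lt_succ_of_le (min_le_right 0 k)⟩ : Fin (k+1)) = 0 :=
      Fin.ext (by simp)
    have a1 : (⟨min k k, Nat.lt_succ_of_le (min_le_right k k)⟩ : Fin (k+1)) = Fin.last k :=
      Fin.ext (by simp [Fin.last])
    rw [a0, a1, hcond.1, hcond.2] at h
    exact h
  · rw [if_neg hcond]; exact bot_le

-- ## algebra of trMul / trSup

lemma supSup {ι : Type*} (s : Finset ι) (f g : ι → Rmax) :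
    s.sup (fun x => f x ⊔ g x) = s.sup f ⊔ s.sup g := by
  apply le_antisymm
  · exact Finset.sup_le fun x hx => sup_le_sup (Finset.le_sup hx) (Finset.le_sup hx)
  · exact sup_le (Finset.sup_mono_fun fun x _ => le_sup_left)
      (Finset.sup_mono_fun fun x _ => le_sup_right)

lemma trMul_sup_left {l m n : ℕ} (A B : Matrix (Fin l) (Fin m) Rmax)
    (C : Matrix (Fin m) (Fin n) Rmax) :
    trMul (trSup A B) C = trSup (trMul A C) (trMul B C) := by
  funext i j
  show (univ.sup fun k => (A i k ⊔ B i k) + C k j) = _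
  rw [show (fun k => (A i k ⊔ B i k) + C k j)
      = fun k => (A i k + C k j) ⊔ (B i k + C k j) from
    funext fun k => (max_add_add_right _ _ _).symm]
  exact supSup _ _ _

lemma trMul_sup_right {l m n : ℕ} (A : Matrix (Fin l) (Fin m) Rmax)
    (B C : Matrix (Fin m) (Fin n) Rmax) :
    trMul A (trSup B C) = trSup (trMul A B) (trMul A C) := by
  funext i j
  show (univ.sup fun k => A i k + (B k j ⊔ C k j)) = _
  rw [show (fun k => A i k + (B k j ⊔ C k j))
      = fun k => (A i k + B k j) ⊔ (A i k + C k j) from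
    funext fun k => (max_add_add_left _ _ _).symm]
  exact supSup _ _ _

lemma trMul_assoc {l m n o : ℕ} (A : Matrix (Fin l) (Fin m) Rmax)
    (B : Matrix (Fin m) (Fin n) Rmax) (C : Matrix (Fin n) (Fin o) Rmax) :
    trMul (trMul A B) C = trMul A (trMul B C) := by
  funext i j
  show (univ.sup fun p => (univ.sup fun k => A i k + B k p) + C p j)
      = univ.sup fun k => A i k + univ.sup fun p => B k p + C p j
  calc (univ.sup fun p => (univ.sup fun k => A i k + B k p) + C p j)
      = univ.sup fun p => univ.sup fun k => (A i k + B k p) + C p j := by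
        apply Finset.sup_congr rfl
        intro p _
        exact supAdd _ _ _
    _ = univ.sup fun k => univ.sup fun p => (A i k + B k p) + C p j := Finset.sup_comm _ _ _
    _ = univ.sup fun k => A i k + univ.sup fun p => B k p + C p j := by
        apply Finset.sup_congr rfl
        intro k _
        rw [addSup]
        apply Finset.sup_congr rfl
        intro p _
        rw [add_assoc]

lemma trMul_trId {l d : ℕ} (A : Matrix (Fin l) (Fin d) Rmax) : trMul A (trId d) = A := by
  funext i j
  apply le_antisymm
  · apply Finset.sup_le
    intro k _
    by_cases h : k = j
    · have e : trId d k j = (0:Rmax) := by simp [trId, h]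
      rw [e, add_zero, h]
    · have e : trId d k j = (⊥:Rmax) := by simp [trId, h]
      rw [e, WithBot.add_bot]
      exact bot_le
  · refine le_trans ?_ (Finset.le_sup (f := fun k => A i k + trId d k j) (mem_univ j))
    have e : trId d j j = (0:Rmax) := by simp [trId]
    show A i j ≤ A i j + trId d j j
    rw [e, add_zero]

noncomputable def botM (m n : ℕ) : Matrix (Fin m) (Fin n) Rmax := fun _ _ => ⊥

lemma trMul_botM {l d n : ℕ} (A : Matrix (Fin l) (Fin d) Rmax) :
    trMul A (botM d n) = botM l n := by
  funext i j
  apply le_antisymm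
  · exact Finset.sup_le fun k _ => le_of_eq (WithBot.add_bot _)
  · exact bot_le

lemma trSup_botM {m n : ℕ} (A : Matrix (Fin m) (Fin n) Rmax) : trSup A (botM m n) = A := by
  funext i j
  exact sup_bot_eq _

-- ## partial star sums

noncomputable def trU {d : ℕ} (H : Matrix (Fin d) (Fin d) Rmax) (n : ℕ) :
    Matrix (Fin d) (Fin d) Rmax :=
  fun i j => (Finset.range n).sup fun t => trPow H t i j

lemma trU_zero {d : ℕ} (H : Matrix (Fin d) (Fin d) Rmax) : trU H 0 = botM d d := by
  funext i j
  simp [trU, botM]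

lemma trU_one {d : ℕ} (H : Matrix (Fin d) (Fin d) Rmax) : trU H 1 = trId d := by
  funext i j
  simp [trU, trPow]

lemma trU_succ {d : ℕ} (H : Matrix (Fin d) (Fin d) Rmax) (n : ℕ) :
    trU H (n+1) = trSup (trSup (trU H n) (trId d)) (trMul (trU H n) H) := by
  funext i j
  have e : trMul (trU H n) H i j = (Finset.range n).sup fun t => trPow H (t+1) i j := by
    show (univ.sup fun k => ((Finset.range n).sup fun t => trPow H t i k) + H k j) = _
    calc (univ.sup fun k => ((Finset.range n).sup fun t => trPow H t i k) + H k j)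
        = univ.sup fun k => (Finset.range n).sup fun t => trPow H t i k + H k j := by
          apply Finset.sup_congr rfl
          intro k _
          exact supAdd _ _ _
      _ = (Finset.range n).sup fun t => univ.sup fun k => trPow H t i k + H k j :=
          Finset.sup_comm _ _ _
      _ = (Finset.range n).sup fun t => trPow H (t+1) i j := rfl
  show ((Finset.range (n+1)).sup fun t => trPow H t i j) = (_ ⊔ trId d i j) ⊔ _
  rw [e]
  apply le_antisymm
  · apply Finset.sup_le
    intro t ht
    rw [Finset.mem_range] at ht
    match t with
    | 0 =>
      refine le_trans ?_ (le_sup_of_le_left le_sup_right)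
      show trPow H 0 i j ≤ trId d i j
      exact le_of_eq rfl
    | t+1 =>
      exact le_sup_of_le_right
        (Finset.le_sup (f := fun t => trPow H (t+1) i j) (Finset.mem_range.mpr (by omega)))
  · apply sup_le
    · apply sup_le
      · exact Finset.sup_mono (Finset.range_subset_range.mpr (Nat.le_succ n))
      · exact le_trans (le_of_eq rfl)
          (Finset.le_sup (f := fun t => trPow H t i j) (Finset.mem_range.mpr (Nat.succ_pos n)))
    · apply Finset.sup_le
      intro t ht
      rw [Finset.mem_range] at ht
      exact Finset.le_sup (f := fun t => trPow H t i j) (Finset.mem_range.mpr (by omega))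

lemma trU_eq_kstar {d : ℕ} (H : Matrix (Fin d) (Fin d) Rmax) (hH : mcm H ≤ 0)
    (n : ℕ) (hn : d ≤ n) : trU H n = kstar H := by
  funext i j
  apply le_antisymm
  · exact Finset.sup_le fun t _ => trPow_le_kstar H hH t i j
  · exact Finset.sup_mono (Finset.range_subset_range.mpr hn)

lemma sdPow_fst_formula {d : ℕ} (M H : Matrix (Fin d) (Fin d) Rmax) (m : ℕ) (hm : 1 ≤ m) :
    (sdPow (M, H) m).1 = trSup (trMul M (trU H m)) (trMul H (trU H (m-1))) := by
  induction m, hm using Nat.le_induction with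
  | base =>
    show M = _
    rw [trU_one, trMul_trId, show (1:ℕ) - 1 = 0 from rfl, trU_zero, trMul_botM, trSup_botM]
  | succ m hm ih =>
    obtain ⟨n, rfl⟩ : ∃ n, m = n + 1 := ⟨m - 1, by omega⟩
    show (sd (sdPow (M, H) (n+1)) (M, H)).1 = _
    show trSup (trSup (trSup (sdPow (M, H) (n+1)).1 M) H) (trMul (sdPow (M, H) (n+1)).1 H) = _
    rw [show n + 1 - 1 = n from rfl] at ih
    rw [ih]
    rw [show n + 1 + 1 - 1 = n + 1 from rfl]
    rw [trMul_sup_left, trMul_assoc, trMul_assoc]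
    have E1 : trMul M (trU H (n+1+1))
        = trSup (trSup (trMul M (trU H (n+1))) M) (trMul M (trMul (trU H (n+1)) H)) := by
      rw [trU_succ H (n+1), trMul_sup_right, trMul_sup_right, trMul_trId]
    have E2 : trMul H (trU H (n+1))
        = trSup (trSup (trMul H (trU H n)) H) (trMul H (trMul (trU H n) H)) := by
      rw [trU_succ H n, trMul_sup_right, trMul_sup_right, trMul_trId]
    rw [E1, E2]
    funext i j
    simp only [trSup]
    ac_rfl

theorem sdPow_fst_of_mcm_nonpos {d : ℕ} (M H : Matrix (Fin d) (Fin d) Rmax)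
    (hH : mcm H ≤ 0) (m : ℕ) (hm : d + 1 ≤ m) :
    (sdPow (M, H) m).1 = trMul (trSup M H) (kstar H) := by
  rw [sdPow_fst_formula M H m (by omega), trU_eq_kstar H hH m (by omega),
    trU_eq_kstar H hH (m-1) (by omega), trMul_sup_left]
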